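/- Let c(x) = ∑_{1≤i<j≤N} c_{i,j}(x_i,x_j) on X = X_1×...×X_N and suppose Γ ⊆ X is nonempty. If for each pair i<j the projection Γ_{i,j} = P_{i,j}(Γ) is contained in the graph of ∂_{c_{i,j}} f_{i,j} for a proper function f_{i,j} : X_i → (-∞,+∞], then the functions u_i(x_i) = ∑_{k>i} f_{i,k}(x_i) + ∑_{k<i} f_{k,i}^{c_{k,i}}(x_i) form a c-splitting tuple of Γ: c ≤ ∑_i u_i on X with equality on Γ. Consequently Γ is c-cyclically monotone. -/

import Mathlib

open scoped BigOperators

/-- The `c`-conjugate of `f : X₁ → (-∞,+∞]` with respect to a two-marginal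
cost `c : X₁ × X₂ → ℝ`. -/
noncomputable def cConj {X1 X2 : Type*} (c : X1 → X2 → ℝ) (f : X1 → EReal)
    (x2 : X2) : EReal :=
  ⨆ x1, ((c x1 x2 : EReal) - f x1)

/-- `Γ` is `c`-cyclically monotone. -/
def CCyclicallyMonotone {N : ℕ} {X : Fin N → Type*}
    (c : (∀ i, X i) → ℝ) (Γ : Set (∀ i, X i)) : Prop :=
  ∀ (n : ℕ) (p : Fin n → ∀ i, X i), (∀ j, p j ∈ Γ) →
    ∀ σ : Fin N → Equiv.Perm (Fin n),
      ∑ j, c (fun i => p (σ i j) i) ≤ ∑ j, c (p j)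

private lemma ereal_coe_sum {α : Type*} (s : Finset α) (g : α → ℝ) :
    ((∑ i ∈ s, g i : ℝ) : EReal) = ∑ i ∈ s, (g i : EReal) := by
  induction s using Finset.cons_induction with
  | empty => simp
  | cons a s ha ih => simp [Finset.sum_cons, EReal.coe_add, ih]

theorem pairwise_monotone_projections_give_splitting_tuple
    {N : ℕ} (hN : 2 ≤ N) {X : Fin N → Type*} (hne : ∀ i, Nonempty (X i))
    (cij : ∀ i j : Fin N, X i → X j → ℝ)
    (f : ∀ i j : Fin N, X i → EReal) (hfbot : ∀ i j (x : X i), f i j x ≠ ⊥)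
    (hfproper : ∀ i j : Fin N, i < j → ∃ x : X i, f i j x ≠ ⊤)
    (Γ : Set (∀ i, X i)) (hΓne : Γ.Nonempty)
    -- each two-marginal projection `Γ_{i,j}` is contained in `gra ∂_{c_{i,j}} f_{i,j}`:
    (hsub : ∀ x ∈ Γ, ∀ i j : Fin N, i < j →
      f i j (x i) + cConj (cij i j) (f i j) (x j) = (cij i j (x i) (x j) : EReal)) :
    -- the `uᵢ` form a `c`-splitting tuple of `Γ`, and `Γ` is `c`-cyclically monotone:
    (∀ x : ∀ i, X i,
      ((∑ i, ∑ j ∈ Finset.Ioi i, cij i j (x i) (x j) : ℝ) : EReal) ≤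
        ∑ i, (∑ j ∈ Finset.Ioi i, f i j (x i) +
              ∑ k ∈ Finset.Iio i, cConj (cij k i) (f k i) (x i))) ∧
    (∀ x ∈ Γ,
      ((∑ i, ∑ j ∈ Finset.Ioi i, cij i j (x i) (x j) : ℝ) : EReal) =
        ∑ i, (∑ j ∈ Finset.Ioi i, f i j (x i) +
              ∑ k ∈ Finset.Iio i, cConj (cij k i) (f k i) (x i))) ∧
    CCyclicallyMonotone (fun x => ∑ i, ∑ j ∈ Finset.Ioi i, cij i j (x i) (x j)) Γ := by
  classical
  set g : ∀ i j : Fin N, X j → EReal := fun i j => cConj (cij i j) (f i j) with hg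
  -- the conjugate is never ⊥ (for proper pairs)
  have hgbot : ∀ i j : Fin N, i < j → ∀ x2 : X j, g i j x2 ≠ ⊥ := by
    intro i j hij x2
    obtain ⟨x0, hx0⟩ := hfproper i j hij
    have hb := hfbot i j x0
    lift f i j x0 to ℝ using ⟨hx0, hb⟩ with r hr
    have hle : ((cij i j x0 x2 : ℝ) - r : ℝ) ≤ g i j x2 := by
      have h1 : ((cij i j x0 x2 : EReal) - f i j x0) ≤
          ⨆ y, ((cij i j y x2 : EReal) - f i j y) :=
        le_iSup (fun y => ((cij i j y x2 : EReal) - f i j y)) x0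
      rw [← hr, ← EReal.coe_sub] at h1
      exact h1
    intro hbot
    rw [hbot] at hle
    exact (EReal.bot_lt_coe _).not_ge hle
  -- key pointwise inequality
  have key1 : ∀ i j : Fin N, i < j → ∀ (x1 : X i) (x2 : X j),
      (cij i j x1 x2 : EReal) ≤ f i j x1 + g i j x2 := by
    intro i j hij x1 x2
    rcases eq_or_ne (f i j x1) ⊤ with htop | htop
    · rw [htop, EReal.top_add_of_ne_bot (hgbot i j hij x2)]
      exact le_top
    · lift f i j x1 to ℝ using ⟨htop, hfbot i j x1⟩ with r hr
      have hle : ((cij i j x1 x2 : ℝ) - r : ℝ) ≤ g i j x2 := by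
        have h1 : ((cij i j x1 x2 : EReal) - f i j x1) ≤
            ⨆ y, ((cij i j y x2 : EReal) - f i j y) :=
          le_iSup (fun y => ((cij i j y x2 : EReal) - f i j y)) x1
        rw [← hr, ← EReal.coe_sub] at h1
        exact h1
      calc (cij i j x1 x2 : EReal) = (r : EReal) + ((cij i j x1 x2 : ℝ) - r : ℝ) := by
            rw [← EReal.coe_add]; norm_num
        _ ≤ (r : EReal) + g i j x2 := by
            exact add_le_add le_rfl hle
  -- reorganize the RHS into a sum over pairs
  have hre : ∀ x : ∀ i, X i,
      (∑ i, (∑ j ∈ Finset.Ioi i, f i j (x i) +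
              ∑ k ∈ Finset.Iio i, g k i (x i)))
      = ∑ i, ∑ j ∈ Finset.Ioi i, (f i j (x i) + g i j (x j)) := by
    intro x
    rw [Finset.sum_add_distrib]
    have hswap : (∑ i, ∑ k ∈ Finset.Iio i, g k i (x i))
        = ∑ k, ∑ i ∈ Finset.Ioi k, g k i (x i) := by
      refine Finset.sum_comm' ?_
      intro i k
      simp [Finset.mem_Iio, Finset.mem_Ioi]
    rw [hswap, ← Finset.sum_add_distrib]
    congr 1
    ext i
    rw [← Finset.sum_add_distrib]
  -- part 1
  have part1 : ∀ x : ∀ i, X i,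
      ((∑ i, ∑ j ∈ Finset.Ioi i, cij i j (x i) (x j) : ℝ) : EReal) ≤
        ∑ i, (∑ j ∈ Finset.Ioi i, f i j (x i) +
              ∑ k ∈ Finset.Iio i, g k i (x i)) := by
    intro x
    rw [hre x, ereal_coe_sum]
    refine Finset.sum_le_sum fun i _ => ?_
    rw [ereal_coe_sum]
    refine Finset.sum_le_sum fun j hj => ?_
    exact key1 i j (Finset.mem_Ioi.mp hj) (x i) (x j)
  -- part 2
  have part2 : ∀ x ∈ Γ,
      ((∑ i, ∑ j ∈ Finset.Ioi i, cij i j (x i) (x j) : ℝ) : EReal) =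
        ∑ i, (∑ j ∈ Finset.Ioi i, f i j (x i) +
              ∑ k ∈ Finset.Iio i, g k i (x i)) := by
    intro x hx
    rw [hre x, ereal_coe_sum]
    refine Finset.sum_congr rfl fun i _ => ?_
    rw [ereal_coe_sum]
    refine Finset.sum_congr rfl fun j hj => ?_
    exact (hsub x hx i j (Finset.mem_Ioi.mp hj)).symm
  refine ⟨part1, part2, ?_⟩
  -- cyclic monotonicity
  intro n p hp σ
  rw [← EReal.coe_le_coe_iff, ereal_coe_sum, ereal_coe_sum]
  calc ∑ j, ((∑ i, ∑ k ∈ Finset.Ioi i, cij i k (p (σ i j) i) (p (σ k j) k) : ℝ) : EReal)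
      ≤ ∑ j, ∑ i, (∑ k ∈ Finset.Ioi i, f i k (p (σ i j) i) +
            ∑ k ∈ Finset.Iio i, g k i (p (σ i j) i)) := by
        exact Finset.sum_le_sum fun j _ => part1 (fun i => p (σ i j) i)
    _ = ∑ i, ∑ j, (∑ k ∈ Finset.Ioi i, f i k (p (σ i j) i) +
            ∑ k ∈ Finset.Iio i, g k i (p (σ i j) i)) := Finset.sum_comm
    _ = ∑ i, ∑ j, (∑ k ∈ Finset.Ioi i, f i k (p j i) +
            ∑ k ∈ Finset.Iio i, g k i (p j i)) := by
        refine Finset.sum_congr rfl fun i _ => ?_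
        exact Fintype.sum_equiv (σ i) _ _ (fun j => rfl)
    _ = ∑ j, ∑ i, (∑ k ∈ Finset.Ioi i, f i k (p j i) +
            ∑ k ∈ Finset.Iio i, g k i (p j i)) := Finset.sum_comm
    _ = ∑ j, ((∑ i, ∑ k ∈ Finset.Ioi i, cij i k (p j i) (p j k) : ℝ) : EReal) := by
        refine Finset.sum_congr rfl fun j _ => ?_
        exact (part2 (p j) (hp j)).symm
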